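/- Let X ⊆ α^ℤ be a subshift with B^∞ ∈ X, and let Φ : X → X be a cellular automaton (a continuous map commuting with the shift) such that Φ(B^∞) = B^∞. Then Φ is uniquely ergodic if and only if d_Φ(B, x) = 1 holds for all x ∈ X. Moreover, if this is the case, then the convergence of (1/n)·|{t ∈ [0, n−1] : Φ^t(x)_0 = B}| to 1 is uniform in x ∈ X. -/

import Mathlib

open MeasureTheory Filter Topology Set

set_option linter.unusedSectionVars false

namespace CAUE

open scoped Classical

variable {Y : Type} [TopologicalSpace Y]

noncomputable def E (Φ : Y → Y) (x : ℕ → Y) (s : Set Y) (n : ℕ) : ℝ :=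
  (∑ t ∈ Finset.range n, if Φ^[t] (x n) ∈ s then (1:ℝ) else 0) / n

theorem E_sum_nonneg (Φ : Y → Y) (z : Y) (s : Set Y) (n : ℕ) :
    0 ≤ ∑ t ∈ Finset.range n, if Φ^[t] z ∈ s then (1:ℝ) else 0 :=
  Finset.sum_nonneg fun _ _ => by positivity

theorem E_sum_le (Φ : Y → Y) (z : Y) (s : Set Y) (n : ℕ) :
    (∑ t ∈ Finset.range n, if Φ^[t] z ∈ s then (1:ℝ) else 0) ≤ n := by
  calc (∑ t ∈ Finset.range n, if Φ^[t] z ∈ s then (1:ℝ) else 0)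
      ≤ ∑ t ∈ Finset.range n, 1 := Finset.sum_le_sum fun i _ => by split <;> norm_num
    _ = n := by simp

theorem E_mem_Icc (Φ : Y → Y) (x : ℕ → Y) (s : Set Y) (n : ℕ) :
    E Φ x s n ∈ Set.Icc (0:ℝ) 1 := by
  rcases Nat.eq_zero_or_pos n with h | h
  · simp [E, h]
  · have hn : (0:ℝ) < n := by exact_mod_cast h
    constructor
    · exact div_nonneg (E_sum_nonneg Φ _ s n) hn.le
    · rw [E, div_le_one hn]
      exact E_sum_le Φ _ s n

theorem E_nonneg (Φ : Y → Y) (x : ℕ → Y) (s : Set Y) (n : ℕ) : 0 ≤ E Φ x s n :=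
  (E_mem_Icc Φ x s n).1

theorem E_le_one (Φ : Y → Y) (x : ℕ → Y) (s : Set Y) (n : ℕ) : E Φ x s n ≤ 1 :=
  (E_mem_Icc Φ x s n).2

theorem E_mono (Φ : Y → Y) (x : ℕ → Y) {s t : Set Y} (h : s ⊆ t) (n : ℕ) :
    E Φ x s n ≤ E Φ x t n := by
  rcases Nat.eq_zero_or_pos n with hn | hn
  · simp [E, hn]
  · rw [E, E, div_le_div_iff_of_pos_right (show (0:ℝ) < n by exact_mod_cast hn)]
    refine Finset.sum_le_sum fun i _ => ?_
    by_cases hi : Φ^[i] (x n) ∈ s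
    · simp [hi, h hi]
    · simp only [hi, if_false]
      split <;> norm_num

theorem E_union_of_disjoint (Φ : Y → Y) (x : ℕ → Y) {s t : Set Y} (h : Disjoint s t) (n : ℕ) :
    E Φ x (s ∪ t) n = E Φ x s n + E Φ x t n := by
  unfold E
  rw [← add_div, ← Finset.sum_add_distrib]
  congr 1
  refine Finset.sum_congr rfl fun i _ => ?_
  by_cases hs : Φ^[i] (x n) ∈ s
  · have ht : Φ^[i] (x n) ∉ t := fun ht => Set.disjoint_left.mp h hs ht
    simp [hs, ht]
  · by_cases ht : Φ^[i] (x n) ∈ t <;> simp [hs, ht]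

theorem E_union_le (Φ : Y → Y) (x : ℕ → Y) (s t : Set Y) (n : ℕ) :
    E Φ x (s ∪ t) n ≤ E Φ x s n + E Φ x t n := by
  rcases Nat.eq_zero_or_pos n with hn | hn
  · simp [E, hn]
  · unfold E
    rw [← add_div, ← Finset.sum_add_distrib,
      div_le_div_iff_of_pos_right (show (0:ℝ) < n by exact_mod_cast hn)]
    refine Finset.sum_le_sum fun i _ => ?_
    by_cases hs : Φ^[i] (x n) ∈ s <;> by_cases ht : Φ^[i] (x n) ∈ t <;>
      simp [hs, ht]

theorem E_univ (Φ : Y → Y) (x : ℕ → Y) (n : ℕ) (hn : 0 < n) : E Φ x univ n = 1 := by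
  have hn' : (0:ℝ) < n := by exact_mod_cast hn
  simp [E, hn'.ne']

/-- the shift-by-one error estimate -/
theorem E_preimage_sub (Φ : Y → Y) (x : ℕ → Y) (s : Set Y) (n : ℕ) (hn : 0 < n) :
    |E Φ x (Φ ⁻¹' s) n - E Φ x s n| ≤ 2 / n := by
  have hn' : (0:ℝ) < n := by exact_mod_cast hn
  unfold E
  rw [div_sub_div_same, abs_div, abs_of_pos hn', div_le_div_iff_of_pos_right hn']
  have h1 : (∑ t ∈ Finset.range n, if Φ^[t] (x n) ∈ Φ ⁻¹' s then (1:ℝ) else 0)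
      = ∑ t ∈ Finset.range n, if Φ^[t+1] (x n) ∈ s then (1:ℝ) else 0 := by
    refine Finset.sum_congr rfl fun i _ => ?_
    rw [Set.mem_preimage, ← Function.iterate_succ_apply' Φ i]
  rw [h1]
  have h2 : (∑ t ∈ Finset.range n, if Φ^[t+1] (x n) ∈ s then (1:ℝ) else 0)
      - (∑ t ∈ Finset.range n, if Φ^[t] (x n) ∈ s then (1:ℝ) else 0)
      = (if Φ^[n] (x n) ∈ s then (1:ℝ) else 0) - (if Φ^[0] (x n) ∈ s then (1:ℝ) else 0) := by
    have ha := Finset.sum_range_succ (fun t => if Φ^[t] (x n) ∈ s then (1:ℝ) else 0) n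
    have hb := Finset.sum_range_succ' (fun t => if Φ^[t] (x n) ∈ s then (1:ℝ) else 0) n
    rw [ha] at hb
    linarith [hb]
  rw [h2]
  have : ∀ (P Q : Prop) [Decidable P] [Decidable Q],
      |(if P then (1:ℝ) else 0) - (if Q then (1:ℝ) else 0)| ≤ 2 := by
    intro P Q _ _; split <;> split <;> norm_num
  exact this _ _



theorem exists_m (Φ : Y → Y) (x : ℕ → Y) (𝒰 : Ultrafilter ℕ) (s : Set Y) :
    ∃ L ∈ Set.Icc (0:ℝ) 1, Tendsto (E Φ x s) 𝒰 (𝓝 L) := by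
  have h : (𝒰.map (E Φ x s) : Filter ℝ) ≤ 𝓟 (Set.Icc (0:ℝ) 1) := by
    rw [le_principal_iff]
    exact Filter.mem_map.mpr (Filter.Eventually.mono (Filter.univ_mem)
      (fun n _ => E_mem_Icc Φ x s n))
  obtain ⟨L, hL, hle⟩ := (isCompact_Icc (a := (0:ℝ)) (b := 1)).ultrafilter_le_nhds
    (𝒰.map (E Φ x s)) h
  exact ⟨L, hL, hle⟩

noncomputable def m (Φ : Y → Y) (x : ℕ → Y) (𝒰 : Ultrafilter ℕ) (s : Set Y) : ℝ :=
  (exists_m Φ x 𝒰 s).choose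

theorem m_mem_Icc (Φ : Y → Y) (x : ℕ → Y) (𝒰 : Ultrafilter ℕ) (s : Set Y) :
    m Φ x 𝒰 s ∈ Set.Icc (0:ℝ) 1 :=
  (exists_m Φ x 𝒰 s).choose_spec.1

theorem m_tendsto (Φ : Y → Y) (x : ℕ → Y) (𝒰 : Ultrafilter ℕ) (s : Set Y) :
    Tendsto (E Φ x s) 𝒰 (𝓝 (m Φ x 𝒰 s)) :=
  (exists_m Φ x 𝒰 s).choose_spec.2

theorem m_eq_of_tendsto {Φ : Y → Y} {x : ℕ → Y} {𝒰 : Ultrafilter ℕ} {s : Set Y} {L : ℝ}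
    (h : Tendsto (E Φ x s) 𝒰 (𝓝 L)) : m Φ x 𝒰 s = L :=
  tendsto_nhds_unique (m_tendsto Φ x 𝒰 s) h

variable {Φ : Y → Y} {x : ℕ → Y} {𝒰 : Ultrafilter ℕ} (h𝒰 : (𝒰 : Filter ℕ) ≤ atTop)

theorem m_nonneg (s : Set Y) : 0 ≤ m Φ x 𝒰 s := (m_mem_Icc Φ x 𝒰 s).1

theorem m_le_one (s : Set Y) : m Φ x 𝒰 s ≤ 1 := (m_mem_Icc Φ x 𝒰 s).2

include h𝒰

theorem m_univ : m Φ x 𝒰 univ = 1 := by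
  apply m_eq_of_tendsto
  apply Tendsto.congr' ?_ tendsto_const_nhds
  filter_upwards [h𝒰 (Filter.eventually_ge_atTop 1)] with n hn
  exact (E_univ Φ x n hn).symm

omit h𝒰

theorem m_mono {s t : Set Y} (h : s ⊆ t) : m Φ x 𝒰 s ≤ m Φ x 𝒰 t :=
  le_of_tendsto_of_tendsto' (m_tendsto Φ x 𝒰 s) (m_tendsto Φ x 𝒰 t) (E_mono Φ x h)

theorem m_union_of_disjoint {s t : Set Y} (h : Disjoint s t) :
    m Φ x 𝒰 (s ∪ t) = m Φ x 𝒰 s + m Φ x 𝒰 t := by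
  apply m_eq_of_tendsto
  have := (m_tendsto Φ x 𝒰 s).add (m_tendsto Φ x 𝒰 t)
  exact Tendsto.congr (fun n => (E_union_of_disjoint Φ x h n).symm) this

theorem m_union_le (s t : Set Y) : m Φ x 𝒰 (s ∪ t) ≤ m Φ x 𝒰 s + m Φ x 𝒰 t :=
  le_of_tendsto_of_tendsto' (m_tendsto Φ x 𝒰 (s ∪ t))
    ((m_tendsto Φ x 𝒰 s).add (m_tendsto Φ x 𝒰 t)) (E_union_le Φ x s t)

include h𝒰

theorem m_preimage (s : Set Y) : m Φ x 𝒰 (Φ ⁻¹' s) = m Φ x 𝒰 s := by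
  apply m_eq_of_tendsto
  have hdiff : Tendsto (fun n => E Φ x (Φ ⁻¹' s) n - E Φ x s n) atTop (𝓝 0) := by
    have hb : ∀ n : ℕ, ‖E Φ x (Φ ⁻¹' s) n - E Φ x s n‖ ≤ 2 / n := by
      intro n
      rcases Nat.eq_zero_or_pos n with hn | hn
      · simp [E, hn]
      · exact E_preimage_sub Φ x s n hn
    apply squeeze_zero_norm hb
    have : Tendsto (fun n : ℕ => (n:ℝ)) atTop atTop := tendsto_natCast_atTop_atTop
    simpa using Tendsto.div_atTop (tendsto_const_nhds (x := (2:ℝ))) this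
  have := (m_tendsto Φ x 𝒰 s).add (hdiff.mono_left h𝒰)
  rw [add_zero] at this
  exact Tendsto.congr (fun n => by ring) this

omit h𝒰

section Measure

open scoped ENNReal NNReal

variable [CompactSpace Y] [T2Space Y] [TotallyDisconnectedSpace Y]
  [SecondCountableTopology Y] [MeasurableSpace Y] [BorelSpace Y]

theorem exists_clopen_between {K U : Set Y} (hK : IsCompact K) (hU : IsOpen U) (h : K ⊆ U) :
    ∃ C : Set Y, IsClopen C ∧ K ⊆ C ∧ C ⊆ U := by
  have hV : ∀ y ∈ K, ∃ V : Set Y, IsClopen V ∧ y ∈ V ∧ V ⊆ U := fun y hy =>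
    compact_exists_isClopen_in_isOpen hU (h hy)
  choose! V hV1 hV2 hV3 using hV
  obtain ⟨t, ht1, ht2⟩ := hK.elim_nhds_subcover V (fun y hy => (hV1 y hy).isOpen.mem_nhds (hV2 y hy))
  refine ⟨⋃ y ∈ t, V y, isClopen_biUnion_finset (fun y hy => hV1 y (ht1 y hy)), ht2, ?_⟩
  exact Set.iUnion₂_subset fun y hy => hV3 y (ht1 y hy)

variable (Φ : Y → Y) (x : ℕ → Y) (𝒰 : Ultrafilter ℕ)

noncomputable def mN (s : Set Y) : ℝ≥0 := Real.toNNReal (m Φ x 𝒰 s)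

theorem mN_coe (s : Set Y) : (mN Φ x 𝒰 s : ℝ) = m Φ x 𝒰 s :=
  Real.coe_toNNReal _ (m_nonneg s)

theorem mN_mono {s t : Set Y} (h : s ⊆ t) : mN Φ x 𝒰 s ≤ mN Φ x 𝒰 t :=
  Real.toNNReal_le_toNNReal (m_mono h)

theorem mN_union_of_disjoint {s t : Set Y} (h : Disjoint s t) :
    mN Φ x 𝒰 (s ∪ t) = mN Φ x 𝒰 s + mN Φ x 𝒰 t := by
  rw [← NNReal.coe_inj, NNReal.coe_add, mN_coe, mN_coe, mN_coe]
  exact m_union_of_disjoint h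

theorem mN_union_le (s t : Set Y) : mN Φ x 𝒰 (s ∪ t) ≤ mN Φ x 𝒰 s + mN Φ x 𝒰 t := by
  rw [← NNReal.coe_le_coe, NNReal.coe_add, mN_coe, mN_coe, mN_coe]
  exact m_union_le s t

instance lamNonempty (K : TopologicalSpace.Compacts Y) :
    Nonempty {C : Set Y // IsClopen C ∧ (K : Set Y) ⊆ C} :=
  ⟨⟨Set.univ, isClopen_univ, Set.subset_univ _⟩⟩

noncomputable def lam (K : TopologicalSpace.Compacts Y) : ℝ≥0 :=
  ⨅ C : {C : Set Y // IsClopen C ∧ (K : Set Y) ⊆ C}, mN Φ x 𝒰 C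

theorem lam_le {K : TopologicalSpace.Compacts Y} {C : Set Y} (hC : IsClopen C)
    (hKC : (K : Set Y) ⊆ C) : lam Φ x 𝒰 K ≤ mN Φ x 𝒰 C := by
  unfold lam
  exact ciInf_le (OrderBot.bddBelow _)
    (⟨C, hC, hKC⟩ : {C : Set Y // IsClopen C ∧ (K : Set Y) ⊆ C})

theorem le_lam {K : TopologicalSpace.Compacts Y} {b : ℝ≥0}
    (h : ∀ C : Set Y, IsClopen C → (K : Set Y) ⊆ C → b ≤ mN Φ x 𝒰 C) : b ≤ lam Φ x 𝒰 K := by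
  unfold lam
  exact le_ciInf fun C => h C.1 C.2.1 C.2.2

noncomputable def con : MeasureTheory.Content Y where
  toFun := lam Φ x 𝒰
  mono' K₁ K₂ h := le_lam Φ x 𝒰 fun C hC hKC => lam_le Φ x 𝒰 hC (h.trans hKC)
  sup_le' := by
    intro K₁ K₂
    refine le_of_forall_pos_le_add fun ε hε => ?_
    obtain ⟨C₁, hC₁⟩ := exists_lt_of_ciInf_lt
      (lt_add_of_pos_right (lam Φ x 𝒰 K₁) (half_pos hε))
    obtain ⟨C₂, hC₂⟩ := exists_lt_of_ciInf_lt
      (lt_add_of_pos_right (lam Φ x 𝒰 K₂) (half_pos hε))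
    have h1 : lam Φ x 𝒰 (K₁ ⊔ K₂) ≤ mN Φ x 𝒰 (C₁.1 ∪ C₂.1) := by
      apply lam_le Φ x 𝒰 (C₁.2.1.union C₂.2.1)
      rw [TopologicalSpace.Compacts.coe_sup]
      exact Set.union_subset_union C₁.2.2 C₂.2.2
    calc lam Φ x 𝒰 (K₁ ⊔ K₂) ≤ mN Φ x 𝒰 (C₁.1 ∪ C₂.1) := h1
      _ ≤ mN Φ x 𝒰 C₁.1 + mN Φ x 𝒰 C₂.1 := mN_union_le Φ x 𝒰 _ _
      _ ≤ (lam Φ x 𝒰 K₁ + ε/2) + (lam Φ x 𝒰 K₂ + ε/2) := add_le_add hC₁.le hC₂.le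
      _ = lam Φ x 𝒰 K₁ + lam Φ x 𝒰 K₂ + ε := by rw [add_add_add_comm, add_halves]
  sup_disjoint' := by
    intro K₁ K₂ hdisj h₁ h₂
    refine le_antisymm ?_ ?_
    · -- this is sup_le applied
      refine le_of_forall_pos_le_add fun ε hε => ?_
      obtain ⟨C₁, hC₁⟩ := exists_lt_of_ciInf_lt
        (lt_add_of_pos_right (lam Φ x 𝒰 K₁) (half_pos hε))
      obtain ⟨C₂, hC₂⟩ := exists_lt_of_ciInf_lt
        (lt_add_of_pos_right (lam Φ x 𝒰 K₂) (half_pos hε))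
      have h1 : lam Φ x 𝒰 (K₁ ⊔ K₂) ≤ mN Φ x 𝒰 (C₁.1 ∪ C₂.1) := by
        apply lam_le Φ x 𝒰 (C₁.2.1.union C₂.2.1)
        rw [TopologicalSpace.Compacts.coe_sup]
        exact Set.union_subset_union C₁.2.2 C₂.2.2
      calc lam Φ x 𝒰 (K₁ ⊔ K₂) ≤ mN Φ x 𝒰 (C₁.1 ∪ C₂.1) := h1
        _ ≤ mN Φ x 𝒰 C₁.1 + mN Φ x 𝒰 C₂.1 := mN_union_le Φ x 𝒰 _ _
        _ ≤ (lam Φ x 𝒰 K₁ + ε/2) + (lam Φ x 𝒰 K₂ + ε/2) := add_le_add hC₁.le hC₂.le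
        _ = lam Φ x 𝒰 K₁ + lam Φ x 𝒰 K₂ + ε := by rw [add_add_add_comm, add_halves]
    · obtain ⟨D, hD, hKD, hDU⟩ := exists_clopen_between K₁.2 h₂.isOpen_compl
        (Set.subset_compl_iff_disjoint_right.mpr hdisj)
      refine le_lam Φ x 𝒰 fun C hC hKC => ?_
      rw [TopologicalSpace.Compacts.coe_sup] at hKC
      have hsub1 : (K₁ : Set Y) ⊆ C ∩ D :=
        Set.subset_inter ((Set.subset_union_left).trans hKC) hKD
      have hsub2 : (K₂ : Set Y) ⊆ C \ D := by
        refine Set.subset_diff.mpr ⟨(Set.subset_union_right).trans hKC, ?_⟩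
        exact Set.disjoint_left.mpr fun a ha hD' => hDU hD' ha
      have hCsplit : C = (C ∩ D) ∪ (C \ D) := by
        rw [Set.inter_union_diff]
      have : mN Φ x 𝒰 C = mN Φ x 𝒰 (C ∩ D) + mN Φ x 𝒰 (C \ D) := by
        conv_lhs => rw [hCsplit]
        exact mN_union_of_disjoint Φ x 𝒰
          (Set.disjoint_left.mpr fun a ha ha' => ha'.2 ha.2)
      rw [this]
      exact add_le_add (lam_le Φ x 𝒰 (hC.inter hD) hsub1)
        (lam_le Φ x 𝒰 (hC.diff hD) hsub2)


theorem con_measure_clopen {s : Set Y} (hs : IsClopen s) :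
    (con Φ x 𝒰).measure s = (mN Φ x 𝒰 s : ℝ≥0∞) := by
  rw [MeasureTheory.Content.measure_apply _ hs.isOpen.measurableSet,
      MeasureTheory.Content.outerMeasure_of_isOpen _ s hs.isOpen]
  unfold MeasureTheory.Content.innerContent
  apply le_antisymm
  · refine iSup₂_le fun K hK => ?_
    exact ENNReal.coe_le_coe.mpr (lam_le Φ x 𝒰 hs hK)
  · refine le_trans ?_
      (le_iSup₂ (f := fun (K : TopologicalSpace.Compacts Y) (_ : (K : Set Y) ⊆ (⟨s, hs.isOpen⟩ : TopologicalSpace.Opens Y)) => (con Φ x 𝒰) K)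
        (⟨s, hs.isClosed.isCompact⟩ : TopologicalSpace.Compacts Y) (by exact subset_rfl))
    exact ENNReal.coe_le_coe.mpr (le_lam Φ x 𝒰 fun C hC hsC => mN_mono Φ x 𝒰 hsC)

theorem con_measure_prob (h𝒰 : (𝒰 : Filter ℕ) ≤ atTop) :
    IsProbabilityMeasure ((con Φ x 𝒰).measure) := by
  constructor
  rw [con_measure_clopen Φ x 𝒰 isClopen_univ]
  rw [show mN Φ x 𝒰 Set.univ = 1 by
    rw [← NNReal.coe_inj, mN_coe, m_univ h𝒰, NNReal.coe_one]]
  simp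

theorem con_measure_inv {Φ : Y → Y} (hΦ : Continuous Φ) {x : ℕ → Y} {𝒰 : Ultrafilter ℕ}
    (h𝒰 : (𝒰 : Filter ℕ) ≤ atTop) {A : Set Y} (hA : MeasurableSet A) :
    (con Φ x 𝒰).measure (Φ ⁻¹' A) = (con Φ x 𝒰).measure A := by
  have hgen : (inferInstance : MeasurableSpace Y)
      = MeasurableSpace.generateFrom {s : Set Y | IsClopen s} := by
    rw [BorelSpace.measurable_eq (α := Y)]
    exact TopologicalSpace.IsTopologicalBasis.borel_eq_generateFrom isTopologicalBasis_isClopen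
  have hpi : IsPiSystem {s : Set Y | IsClopen s} := fun s hs t ht _ => hs.inter ht
  have hprob : IsProbabilityMeasure ((con Φ x 𝒰).measure) := con_measure_prob Φ x 𝒰 h𝒰
  have hprob2 : IsProbabilityMeasure (Measure.map Φ ((con Φ x 𝒰).measure)) :=
    MeasureTheory.Measure.isProbabilityMeasure_map hΦ.measurable.aemeasurable
  have hmap : Measure.map Φ ((con Φ x 𝒰).measure) = (con Φ x 𝒰).measure := by
    refine MeasureTheory.ext_of_generate_finite _ hgen hpi ?_ ?_
    · intro s hs
      rw [Measure.map_apply hΦ.measurable hs.isOpen.measurableSet,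
        con_measure_clopen Φ x 𝒰 (hs.preimage hΦ), con_measure_clopen Φ x 𝒰 hs]
      rw [show mN Φ x 𝒰 (Φ ⁻¹' s) = mN Φ x 𝒰 s by
        rw [← NNReal.coe_inj, mN_coe, mN_coe]; exact m_preimage h𝒰 s]
    · rw [Measure.map_apply hΦ.measurable MeasurableSet.univ, Set.preimage_univ]
  conv_rhs => rw [← hmap]
  rw [Measure.map_apply hΦ.measurable hA]

theorem exists_invariant_measure {Φ : Y → Y} (hΦ : Continuous Φ) (x : ℕ → Y) (𝒰 : Ultrafilter ℕ)
    (h𝒰 : (𝒰 : Filter ℕ) ≤ atTop) :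
    ∃ μ : Measure Y, IsProbabilityMeasure μ ∧ (∀ A : Set Y, MeasurableSet A → μ (Φ ⁻¹' A) = μ A) ∧
      ∀ s : Set Y, IsClopen s → μ s = ENNReal.ofReal (m Φ x 𝒰 s) := by
  refine ⟨(con Φ x 𝒰).measure, con_measure_prob Φ x 𝒰 h𝒰,
    fun A hA => con_measure_inv hΦ h𝒰 hA, fun s hs => ?_⟩
  rw [con_measure_clopen Φ x 𝒰 hs]
  rfl

end Measure
end CAUE

open MeasureTheory Filter Topology Set

open scoped ENNReal NNReal

/-- liminf = 1 for a [0,1]-valued sequence implies convergence to 1 -/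
theorem CAUE.tendsto_of_liminf_eq_one {f : ℕ → ℝ} (hf : ∀ n, f n ∈ Set.Icc (0:ℝ) 1)
    (h : Filter.liminf f Filter.atTop = 1) : Filter.Tendsto f Filter.atTop (𝓝 1) := by
  have hba : Filter.IsBoundedUnder (· ≤ ·) Filter.atTop f :=
    Filter.isBoundedUnder_of ⟨1, fun n => (hf n).2⟩
  have hbb : Filter.IsBoundedUnder (· ≥ ·) Filter.atTop f :=
    Filter.isBoundedUnder_of ⟨0, fun n => (hf n).1⟩
  have h1 : Filter.limsup f Filter.atTop ≤ 1 :=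
    Filter.limsup_le_of_le hbb.isCoboundedUnder_le (Filter.Eventually.of_forall fun n => (hf n).2)
  have h2 : (1:ℝ) ≤ Filter.limsup f Filter.atTop := h ▸ Filter.liminf_le_limsup hba hbb
  exact tendsto_of_liminf_eq_limsup h (le_antisymm h1 h2) hba hbb

theorem uniquelyErgodic_iff_blank_density_one_subshift
    {α : Type} [Fintype α] [DecidableEq α] [TopologicalSpace α] [DiscreteTopology α]
    [MeasurableSpace α] [BorelSpace α]
    (B : α) (X : Set (ℤ → α))
    (hXclosed : IsClosed X)
    (hXshift : (fun x : ℤ → α => fun i => x (i + 1)) '' X = X)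
    (hBX : (fun _ : ℤ => B) ∈ X)
    (Φ : X → X)
    (hcont : Continuous Φ)
    (hcomm : ∀ x y : X, ((y : ℤ → α) = fun i => (x : ℤ → α) (i + 1)) →
        ((Φ y : ℤ → α) = fun i => (Φ x : ℤ → α) (i + 1)))
    (hq : (Φ ⟨fun _ => B, hBX⟩ : ℤ → α) = fun _ => B) :
    ((∃! μ : Measure X, IsProbabilityMeasure μ ∧
          ∀ A : Set X, MeasurableSet A → μ (Φ ⁻¹' A) = μ A) ↔
      ∀ x : X,
        Filter.liminf (fun n : ℕ =>
            (((Finset.range n).filter fun t => (Φ^[t] x : ℤ → α) 0 = B).card : ℝ) / n)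
          Filter.atTop = 1) ∧
    ((∃! μ : Measure X, IsProbabilityMeasure μ ∧
          ∀ A : Set X, MeasurableSet A → μ (Φ ⁻¹' A) = μ A) →
      ∀ ε : ℝ, 0 < ε → ∃ N : ℕ, ∀ n : ℕ, N ≤ n → ∀ x : X,
        |(((Finset.range n).filter fun t => (Φ^[t] x : ℤ → α) 0 = B).card : ℝ) / n - 1|
          < ε) := by
  haveI : CompactSpace X := isCompact_iff_compactSpace.mp hXclosed.isCompact
  set p : X := ⟨fun _ => B, hBX⟩ with hp
  have hΦp : Φ p = p := Subtype.ext hq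
  -- the cylinder sets
  set U : ℤ → Set X := fun k => {y : X | (y : ℤ → α) k = B} with hUdef
  have hUclopen : ∀ k, IsClopen (U k) := fun k =>
    (isClopen_discrete {B}).preimage ((continuous_apply k).comp continuous_subtype_val)
  have hUmeas : ∀ k, MeasurableSet (U k) := fun k => (hUclopen k).isOpen.measurableSet
  have hpU : ∀ k, p ∈ U k := fun k => rfl
  -- connect the card expression with CAUE.E
  have hEeq : ∀ (x : ℕ → X) (n : ℕ),
      (((Finset.range n).filter fun t => (Φ^[t] (x n) : ℤ → α) 0 = B).card : ℝ) / n
        = CAUE.E Φ x (U 0) n := by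
    intro x n
    rw [CAUE.E, Finset.card_filter]
    congr 1
    rw [Nat.cast_sum]
    refine Finset.sum_congr rfl fun i _ => ?_
    by_cases h : (Φ^[i] (x n) : ℤ → α) 0 = B
    · rw [if_pos h, if_pos (show Φ^[i] (x n) ∈ U 0 from h)]; norm_num
    · rw [if_neg h, if_neg (show Φ^[i] (x n) ∉ U 0 from h)]; norm_num
  -- the dirac measure at p is invariant
  have hdiracinv : ∀ A : Set X, MeasurableSet A →
      (Measure.dirac p) (Φ ⁻¹' A) = (Measure.dirac p) A := by
    intro A hA
    rw [Measure.dirac_apply' _ (hA.preimage hcont.measurable), Measure.dirac_apply' _ hA]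
    have hmemiff : p ∈ Φ ⁻¹' A ↔ p ∈ A := by rw [Set.mem_preimage, hΦp]
    by_cases hpA : p ∈ A
    · rw [Set.indicator_of_mem hpA, Set.indicator_of_mem (hmemiff.mpr hpA)]
    · rw [Set.indicator_of_notMem hpA, Set.indicator_of_notMem (fun hc => hpA (hmemiff.mp hc))]
  -- the shift equivalence
  have hmem1 : ∀ y : X, (fun i => (y : ℤ → α) (i + 1)) ∈ X := by
    intro y
    have h := Set.mem_image_of_mem (fun x : ℤ → α => fun i => x (i + 1)) y.2
    rwa [hXshift] at h
  have hmem2 : ∀ y : X, (fun i => (y : ℤ → α) (i - 1)) ∈ X := by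
    intro y
    have h : (y : ℤ → α) ∈ (fun x : ℤ → α => fun i => x (i + 1)) '' X := by
      rw [hXshift]; exact y.2
    obtain ⟨z, hz, hzy⟩ := h
    have : (fun i => (y : ℤ → α) (i - 1)) = z := by
      funext i
      rw [← hzy]
      simp
    rwa [this]
  set e : Equiv.Perm X :=
    { toFun := fun y => ⟨fun i => (y : ℤ → α) (i + 1), hmem1 y⟩
      invFun := fun y => ⟨fun i => (y : ℤ → α) (i - 1), hmem2 y⟩
      left_inv := fun y => Subtype.ext (funext fun i => by simp)
      right_inv := fun y => Subtype.ext (funext fun i => by simp) } with he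
  have hcommT : ∀ y : X, Φ (e y) = e (Φ y) := by
    intro y
    exact Subtype.ext (hcomm y (e y) rfl)
  have hcommTinv : ∀ y : X, Φ (e.symm y) = e.symm (Φ y) := by
    intro y
    have := hcommT (e.symm y)
    rw [Equiv.apply_symm_apply] at this
    rw [this, Equiv.symm_apply_apply]
  have hcoord : ∀ (k : ℤ) (y : X) (i : ℤ), (((e ^ k) y : X) : ℤ → α) i = (y : ℤ → α) (i + k) := by
    intro k
    induction k using Int.induction_on with
    | zero => intro y i; simp
    | succ k ih =>
        intro y i
        have hsplit : e ^ ((k : ℤ) + 1) = e ^ (k : ℤ) * e := by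
          rw [zpow_add_one]
        rw [hsplit]
        have : ((e ^ (k:ℤ) * e) y : X) = (e ^ (k:ℤ)) (e y) := rfl
        rw [this, ih (e y) i]
        show ((e y : X) : ℤ → α) (i + k) = (y : ℤ → α) (i + (k + 1))
        show (y : ℤ → α) (i + k + 1) = (y : ℤ → α) (i + (k + 1))
        ring_nf
    | pred k ih =>
        intro y i
        have hsplit : e ^ (-(k : ℤ) - 1) = e ^ (-(k : ℤ)) * e⁻¹ := by
          rw [zpow_sub_one]
        rw [hsplit]
        have : ((e ^ (-(k:ℤ)) * e⁻¹) y : X) = (e ^ (-(k:ℤ))) (e⁻¹ y) := rfl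
        rw [this, ih (e⁻¹ y) i]
        show ((e⁻¹ y : X) : ℤ → α) (i + -(k:ℤ)) = (y : ℤ → α) (i + (-(k:ℤ) - 1))
        have : ((e⁻¹ y : X) : ℤ → α) = fun j => (y : ℤ → α) (j - 1) := rfl
        rw [this]
        ring_nf
  have hcommk : ∀ (k : ℤ) (y : X), Φ ((e ^ k) y) = (e ^ k) (Φ y) := by
    intro k
    induction k using Int.induction_on with
    | zero => intro y; simp
    | succ k ih =>
        intro y
        rw [zpow_add_one]
        show Φ ((e ^ (k:ℤ)) (e y)) = (e ^ (k:ℤ)) (e (Φ y))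
        rw [ih (e y), hcommT y]
    | pred k ih =>
        intro y
        rw [zpow_sub_one]
        show Φ ((e ^ (-(k:ℤ))) (e⁻¹ y)) = (e ^ (-(k:ℤ))) (e⁻¹ (Φ y))
        rw [ih (e⁻¹ y)]
        congr 1
        exact hcommTinv y
  have hiter : ∀ (t : ℕ) (k : ℤ) (y : X), Φ^[t] ((e ^ k) y) = (e ^ k) (Φ^[t] y) := by
    intro t
    induction t with
    | zero => intro k y; simp
    | succ t ih =>
        intro k y
        rw [Function.iterate_succ_apply', Function.iterate_succ_apply', ih, hcommk]
    -- density at every coordinate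
  have hdensk : (∀ x : X, Filter.liminf (fun n : ℕ =>
        (((Finset.range n).filter fun t => (Φ^[t] x : ℤ → α) 0 = B).card : ℝ) / n)
        Filter.atTop = 1) →
      ∀ (k : ℤ) (z : X),
        Filter.liminf (fun n => CAUE.E Φ (fun _ => z) (U k) n) Filter.atTop = 1 := by
    intro hx k z
    have h1 := hx ((e ^ k) z)
    have h2 : ∀ n : ℕ, (((Finset.range n).filter
          fun t => (Φ^[t] ((e ^ k) z) : ℤ → α) 0 = B).card : ℝ) / n
        = CAUE.E Φ (fun _ => z) (U k) n := by
      intro n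
      rw [hEeq (fun _ => (e ^ k) z) n]
      unfold CAUE.E
      congr 1
      refine Finset.sum_congr rfl fun i _ => ?_
      have hco : (Φ^[i] ((e ^ k) z) : ℤ → α) 0 = (Φ^[i] z : ℤ → α) k := by
        rw [hiter i k z, hcoord k (Φ^[i] z) 0, zero_add]
      by_cases hm : Φ^[i] z ∈ U k
      · rw [if_pos hm, if_pos (show Φ^[i] ((e ^ k) z) ∈ U 0 from hco.trans hm)]
      · rw [if_neg hm, if_neg (show Φ^[i] ((e ^ k) z) ∉ U 0 from
          fun hmem => hm (hco.symm.trans hmem))]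
    rw [show (fun n : ℕ => (((Finset.range n).filter
          fun t => (Φ^[t] ((e ^ k) z) : ℤ → α) 0 = B).card : ℝ) / n)
        = fun n => CAUE.E Φ (fun _ => z) (U k) n from funext h2] at h1
    exact h1
  -- uniqueness from density
  have huniq : (∀ x : X, Filter.liminf (fun n : ℕ =>
        (((Finset.range n).filter fun t => (Φ^[t] x : ℤ → α) 0 = B).card : ℝ) / n)
        Filter.atTop = 1) →
      ∀ μ : Measure X, IsProbabilityMeasure μ →
        (∀ A : Set X, MeasurableSet A → μ (Φ ⁻¹' A) = μ A) → μ = Measure.dirac p := by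
    intro hx μ hμprob hμinv
    have hUk1 : ∀ k : ℤ, μ (U k) = 1 := by
      intro k
      have hiterinv : ∀ t : ℕ, μ (Φ^[t] ⁻¹' (U k)) = μ (U k) := by
        intro t
        induction t with
        | zero => simp
        | succ t ih =>
            rw [Function.iterate_succ, Set.preimage_comp,
              hμinv _ ((hUmeas k).preimage (hcont.measurable.iterate t))]
            exact ih
      set F : ℕ → X → ℝ≥0∞ := fun n ω =>
        (∑ t ∈ Finset.range n, (Φ^[t] ⁻¹' (U k)).indicator (fun _ => (1:ℝ≥0∞)) ω) / n with hF
      have hsummeas : ∀ n : ℕ, Measurable fun ω : X =>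
          ∑ t ∈ Finset.range n, (Φ^[t] ⁻¹' (U k)).indicator (fun _ => (1:ℝ≥0∞)) ω :=
        fun n => Finset.measurable_sum _ fun t _ =>
          measurable_const.indicator ((hUmeas k).preimage (hcont.measurable.iterate t))
      have hFmeas : ∀ n, Measurable (F n) := by
        intro n
        rw [hF]
        exact (hsummeas n).div_const _
      have hFint : ∀ n : ℕ, 1 ≤ n → ∫⁻ ω, F n ω ∂μ = μ (U k) := by
        intro n hn
        have hn0 : (n : ℝ≥0∞) ≠ 0 := Nat.cast_ne_zero.mpr (Nat.one_le_iff_ne_zero.mp hn)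
        rw [hF]
        simp only [div_eq_mul_inv]
        rw [lintegral_mul_const _ (hsummeas n),
          lintegral_finset_sum _ (fun t _ =>
            measurable_const.indicator ((hUmeas k).preimage (hcont.measurable.iterate t)))]
        have : ∀ t ∈ Finset.range n,
            ∫⁻ ω, (Φ^[t] ⁻¹' (U k)).indicator (fun _ => (1:ℝ≥0∞)) ω ∂μ = μ (U k) := by
          intro t _
          rw [lintegral_indicator_const ((hUmeas k).preimage (hcont.measurable.iterate t)),
            one_mul, hiterinv t]
        rw [Finset.sum_congr rfl this, Finset.sum_const, Finset.card_range, nsmul_eq_mul,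
          mul_comm (n : ℝ≥0∞) (μ (U k)), mul_assoc,
          ENNReal.mul_inv_cancel hn0 (ENNReal.natCast_ne_top n), mul_one]
      have hFtend : ∀ ω : X, Filter.Tendsto (fun n => F n ω) Filter.atTop (𝓝 1) := by
        intro ω
        have hreal : Filter.Tendsto (fun n => CAUE.E Φ (fun _ => ω) (U k) n)
            Filter.atTop (𝓝 1) :=
          CAUE.tendsto_of_liminf_eq_one (fun n => CAUE.E_mem_Icc Φ _ (U k) n) (hdensk hx k ω)
        have h2 : Filter.Tendsto (fun n => ENNReal.ofReal (CAUE.E Φ (fun _ => ω) (U k) n))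
            Filter.atTop (𝓝 (ENNReal.ofReal 1)) := ENNReal.tendsto_ofReal hreal
        rw [ENNReal.ofReal_one] at h2
        apply h2.congr'
        filter_upwards [eventually_ge_atTop 1] with n hn
        rw [CAUE.E, ENNReal.ofReal_div_of_pos (by exact_mod_cast hn), hF]
        simp only
        congr 1
        · rw [ENNReal.ofReal_sum_of_nonneg (fun i _ => by positivity)]
          refine Finset.sum_congr rfl fun i _ => ?_
          by_cases hi : Φ^[i] ω ∈ U k
          · rw [if_pos hi, Set.indicator_of_mem (show ω ∈ Φ^[i] ⁻¹' (U k) from hi),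
              ENNReal.ofReal_one]
          · rw [if_neg hi, Set.indicator_of_notMem (show ω ∉ Φ^[i] ⁻¹' (U k) from hi),
              ENNReal.ofReal_zero]
        · exact ENNReal.ofReal_natCast n
      have hfatou := MeasureTheory.lintegral_liminf_le hFmeas (μ := μ) (u := Filter.atTop)
      have hL : ∫⁻ ω, Filter.liminf (fun n => F n ω) Filter.atTop ∂μ = 1 := by
        rw [lintegral_congr (fun ω => (hFtend ω).liminf_eq), lintegral_one, measure_univ]
      have hR : Filter.liminf (fun n => ∫⁻ ω, F n ω ∂μ) Filter.atTop = μ (U k) := by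
        refine Filter.Tendsto.liminf_eq ?_
        apply Filter.Tendsto.congr' ?_ tendsto_const_nhds
        filter_upwards [eventually_ge_atTop 1] with n hn
        exact (hFint n hn).symm
      rw [hL, hR] at hfatou
      exact le_antisymm prob_le_one hfatou
    have hcap : ⋂ k : ℤ, U k = {p} := by
      ext y
      simp only [Set.mem_iInter, Set.mem_singleton_iff, hUdef, Set.mem_setOf_eq]
      constructor
      · intro h
        exact Subtype.ext (funext fun k => h k)
      · intro h k
        rw [h]
    have hcompl : μ ({p}ᶜ : Set X) = 0 := by
      have hcc : ({p}ᶜ : Set X) = ⋃ k : ℤ, (U k)ᶜ := by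
        rw [← Set.compl_iInter, hcap]
      rw [hcc]
      refine measure_iUnion_null fun k => ?_
      rw [measure_compl (hUmeas k) (measure_ne_top μ _), measure_univ, hUk1 k, tsub_self]
    ext A hA
    rw [Measure.dirac_apply' _ hA]
    by_cases hpA : p ∈ A
    · rw [Set.indicator_of_mem hpA]
      have hAc : μ Aᶜ = 0 :=
        measure_mono_null (Set.compl_subset_compl.mpr (Set.singleton_subset_iff.mpr hpA)) hcompl
      have h1 : (1:ℝ≥0∞) - μ A = 0 := by
        rw [← measure_univ (μ := μ), ← measure_compl hA (measure_ne_top μ _), hAc]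
      have h2 : μ A = 1 := le_antisymm prob_le_one (tsub_eq_zero_iff_le.mp h1)
      rw [h2]
      rfl
    · rw [Set.indicator_of_notMem hpA]
      exact measure_mono_null (Set.subset_compl_singleton_iff.mpr hpA) hcompl
  -- uniform convergence from unique ergodicity
  have hKEY : (∃! μ : Measure X, IsProbabilityMeasure μ ∧
        ∀ A : Set X, MeasurableSet A → μ (Φ ⁻¹' A) = μ A) →
      ∀ ε : ℝ, 0 < ε → ∃ N : ℕ, ∀ n : ℕ, N ≤ n → ∀ x : X,
        |(((Finset.range n).filter fun t => (Φ^[t] x : ℤ → α) 0 = B).card : ℝ) / n - 1|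
          < ε := by
    intro hEU ε hε
    by_contra hcon
    push_neg at hcon
    set S : Set ℕ := {n | ∃ z : X, ε ≤
      |(((Finset.range n).filter fun t => (Φ^[t] z : ℤ → α) 0 = B).card : ℝ) / n - 1|} with hS
    have hfreq : ∃ᶠ n in Filter.atTop, n ∈ S := by
      rw [Filter.frequently_atTop]
      intro N
      obtain ⟨n, hn1, z, hz⟩ := hcon N
      exact ⟨n, hn1, z, hz⟩
    haveI hNB : (Filter.atTop ⊓ Filter.principal S).NeBot :=
      Filter.frequently_mem_iff_neBot.mp hfreq
    set 𝒰 : Ultrafilter ℕ := Ultrafilter.of (Filter.atTop ⊓ Filter.principal S) with h𝒰def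
    have h𝒰 : (𝒰 : Filter ℕ) ≤ Filter.atTop := (Ultrafilter.of_le _).trans inf_le_left
    have hSU : S ∈ 𝒰 := le_principal_iff.mp ((Ultrafilter.of_le _).trans inf_le_right)
    classical
    set x : ℕ → X := fun n => if h : n ∈ S then h.choose else p with hxdef
    have hxS : ∀ n ∈ S, ε ≤
        |(((Finset.range n).filter fun t => (Φ^[t] (x n) : ℤ → α) 0 = B).card : ℝ) / n - 1| := by
      intro n hn
      have hxn : x n = hn.choose := by rw [hxdef]; simp only [dif_pos hn]
      rw [hxn]
      exact hn.choose_spec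
    obtain ⟨μ, hμprob, hμinv, hμclopen⟩ := CAUE.exists_invariant_measure hcont x 𝒰 h𝒰
    have hμdirac : μ = Measure.dirac p :=
      hEU.unique ⟨hμprob, hμinv⟩ ⟨inferInstance, hdiracinv⟩
    have hμU0 : μ (U 0) = 1 := by
      rw [hμdirac, Measure.dirac_apply' _ (hUmeas 0), Set.indicator_of_mem (hpU 0)]
      rfl
    have hm1 : CAUE.m Φ x 𝒰 (U 0) = 1 := by
      have h1 := hμclopen (U 0) (hUclopen 0)
      rw [hμU0] at h1
      exact ENNReal.ofReal_eq_one.mp h1.symm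
    have hle : CAUE.m Φ x 𝒰 (U 0) ≤ 1 - ε := by
      apply le_of_tendsto (CAUE.m_tendsto Φ x 𝒰 (U 0))
      filter_upwards [hSU] with n hn
      have h1 := hxS n hn
      rw [hEeq x n] at h1
      have h2 := CAUE.E_le_one Φ x (U 0) n
      have h3 : |CAUE.E Φ x (U 0) n - 1| = 1 - CAUE.E Φ x (U 0) n := by
        rw [abs_of_nonpos (by linarith)]
        ring
      rw [h3] at h1
      linarith
    rw [hm1] at hle
    linarith
  refine ⟨⟨?_, ?_⟩, hKEY⟩
  · intro hEU x
    have htend : Filter.Tendsto (fun n : ℕ =>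
        (((Finset.range n).filter fun t => (Φ^[t] x : ℤ → α) 0 = B).card : ℝ) / n)
        Filter.atTop (𝓝 1) := by
      rw [Metric.tendsto_atTop]
      intro ε hε
      obtain ⟨N, hN⟩ := hKEY hEU ε hε
      exact ⟨N, fun n hn => by rw [Real.dist_eq]; exact hN n hn x⟩
    exact htend.liminf_eq
  · intro hdens
    exact ⟨Measure.dirac p, ⟨inferInstance, hdiracinv⟩,
      fun μ' h' => huniq hdens μ' h'.1 h'.2⟩
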